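/- arXiv:2301.09196 — 2 statements merged into one kernel-verified Lean document; each statement's English description precedes it below -/
import Mathlib

section
/- Let ε > 0 and m ≥ 2 an integer, ζ a primitive m-th root of unity in ℂ, and y a random variable valued in ℤ/mℤ such that P(y = s) ≤ 1 − ε for every s ∈ ℤ/mℤ. Then |E(ζ^y)| ≤ exp(−ε/m²). -/
lemma aux_norm (m : ℕ) (hm : m ≠ 0) (z : ℂ) (hzm : z ^ m = 1) : ‖z‖ = 1 := by
  have h : ‖z‖ ^ m = 1 := by rw [← norm_pow, hzm, norm_one]
  rcases pow_eq_one_iff_cases.mp h with h1 | h1 | h1 <;>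
    first | omega | linarith | nlinarith [norm_nonneg z]

lemma aux_abs (m : ℕ) (hm : 2 ≤ m) (z : ℂ) (hzm : z ^ m = 1) (hz1 : z ≠ 1) :
    2 / (m : ℝ) ≤ ‖1 - z‖ := by
  have hm0 : (0:ℝ) < m := by positivity
  have habs : ‖z‖ = 1 := aux_norm m (by omega) z hzm
  have hub : ∀ j : ℕ, ‖1 - z ^ j‖ ≤ j * ‖1 - z‖ := by
    intro j
    have h1 : 1 - z ^ j = -((∑ i ∈ Finset.range j, z ^ i) * (z - 1)) := by
      rw [geom_sum_mul]; ring
    have h2 : ‖∑ i ∈ Finset.range j, z ^ i‖ ≤ (j : ℝ) := by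
      calc ‖∑ i ∈ Finset.range j, z ^ i‖
          ≤ ∑ i ∈ Finset.range j, ‖z ^ i‖ :=
            norm_sum_le _ _
        _ = (j : ℝ) := by
            simp [norm_pow, habs]
    calc ‖1 - z ^ j‖
        = ‖∑ i ∈ Finset.range j, z ^ i‖ * ‖z - 1‖ := by
          rw [h1, norm_neg, norm_mul]
      _ ≤ (j : ℝ) * ‖z - 1‖ :=
          mul_le_mul_of_nonneg_right h2 (norm_nonneg _)
      _ = (j : ℝ) * ‖1 - z‖ := by rw [norm_sub_rev]
  have hgeom : ∑ i ∈ Finset.range m, z ^ i = 0 := by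
    rw [geom_sum_eq hz1, hzm, sub_self, zero_div]
  have hmsum : (m : ℂ) = ∑ j ∈ Finset.range m, (1 - z ^ j) := by
    rw [Finset.sum_sub_distrib, hgeom, sub_zero, Finset.sum_const, Finset.card_range]
    simp
  have hS : (∑ j ∈ Finset.range m, (j : ℝ)) * 2 = (m : ℝ) * ((m : ℝ) - 1) := by
    have := Finset.sum_range_id_mul_two m
    have h' : ((∑ i ∈ Finset.range m, i : ℕ) : ℝ) * 2 = ((m * (m - 1) : ℕ) : ℝ) := by
      exact_mod_cast congrArg (Nat.cast : ℕ → ℝ) this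
    push_cast [Nat.cast_sub (by omega : 1 ≤ m)] at h'
    push_cast
    linarith
  have hmain : (m : ℝ) ≤ (∑ j ∈ Finset.range m, (j : ℝ)) * ‖1 - z‖ := by
    calc (m : ℝ) = ‖(m : ℂ)‖ := by simp
      _ = ‖∑ j ∈ Finset.range m, (1 - z ^ j)‖ := by rw [← hmsum]
      _ ≤ ∑ j ∈ Finset.range m, ‖1 - z ^ j‖ :=
          norm_sum_le _ _
      _ ≤ ∑ j ∈ Finset.range m, (j : ℝ) * ‖1 - z‖ :=
          Finset.sum_le_sum fun j _ => hub j
      _ = (∑ j ∈ Finset.range m, (j : ℝ)) * ‖1 - z‖ := by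
          rw [Finset.sum_mul]
  rw [div_le_iff₀ hm0]
  nlinarith [norm_nonneg (1 - z), hmain, hS]

lemma aux_re (m : ℕ) (hm : 2 ≤ m) (z : ℂ) (hzm : z ^ m = 1) (hz1 : z ≠ 1) :
    z.re ≤ 1 - 2 / (m : ℝ) ^ 2 := by
  have hm0 : (0:ℝ) < m := by positivity
  have habs : ‖z‖ = 1 := aux_norm m (by omega) z hzm
  have h1 : z.re * z.re + z.im * z.im = 1 := by
    have := Complex.sq_norm z
    rw [habs, Complex.normSq_apply] at this
    linarith [this]
  have h2 := aux_abs m hm z hzm hz1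
  have h3 : (2 / (m:ℝ)) ^ 2 ≤ ‖1 - z‖ ^ 2 :=
    pow_le_pow_left₀ (by positivity) h2 2
  rw [Complex.sq_norm, Complex.normSq_apply] at h3
  simp only [Complex.sub_re, Complex.sub_im, Complex.one_re, Complex.one_im] at h3
  have h4 : (2 / (m:ℝ)) ^ 2 = 4 / (m:ℝ) ^ 2 := by ring
  have h5 : 4 / (m:ℝ) ^ 2 = 2 * (2 / (m:ℝ) ^ 2) := by ring
  nlinarith [h3, h1]

/-- If `ζ` is a primitive `m`-th root of unity (`m ≥ 2`) and `y` is a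
random variable valued in `ℤ/mℤ` (given by its distribution, a `PMF`) which is
`ε`-nonconstant, i.e. `P(y = s) ≤ 1 - ε` for all `s`, then `|E(ζ^y)| ≤ exp(-ε/m²)`. -/
theorem stmt_0 (ε : ℝ) (hε : 0 < ε) (m : ℕ) [NeZero m] (hm : 2 ≤ m)
    (ζ : ℂ) (hζ : IsPrimitiveRoot ζ m)
    (y : PMF (ZMod m))
    (hy : ∀ s : ZMod m, (y s).toReal ≤ 1 - ε) :
    ‖∑ s : ZMod m, (y s).toReal • ζ ^ (s.val)‖ ≤
      Real.exp (-ε / (m : ℝ) ^ 2) := by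
  have hm0 : (0:ℝ) < m := by positivity
  set p : ZMod m → ℝ := fun s => (y s).toReal with hp
  have hp0 : ∀ s, 0 ≤ p s := fun s => ENNReal.toReal_nonneg
  have hpsum : ∑ s : ZMod m, p s = 1 := by
    have h := y.tsum_coe
    rw [tsum_fintype] at h
    have h2 : ((∑ s : ZMod m, y s).toReal) = 1 := by rw [h]; simp
    rw [ENNReal.toReal_sum (fun s _ => PMF.apply_ne_top y s)] at h2
    exact h2
  set f : ZMod m → ℂ := fun s => ζ ^ s.val with hf
  have hζm : ζ ^ m = 1 := hζ.pow_eq_one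
  have hfm : ∀ s, f s ^ m = 1 := by
    intro s
    show (ζ ^ s.val) ^ m = 1
    rw [← pow_mul, mul_comm, pow_mul, hζm, one_pow]
  have hf1 : ∀ s, ‖f s‖ = 1 := fun s => aux_norm m (by omega) _ (hfm s)
  have hfmul : ∀ s t : ZMod m, f s * (starRingEnd ℂ) (f t) = f (s - t) := by
    intro s t
    have hft : f t ≠ 0 := by
      intro h
      have h' := hf1 t
      rw [h] at h'
      simpa using h'
    have h1 : f (s - t) * f t = f s := by
      show ζ ^ (s - t).val * ζ ^ t.val = ζ ^ s.val
      rw [← pow_add, pow_eq_pow_mod _ hζm, ← ZMod.val_add, sub_add_cancel]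
    have h2 : (starRingEnd ℂ) (f t) = (f t)⁻¹ := by
      rw [Complex.inv_eq_conj]
      exact hf1 t
    rw [h2, ← h1]
    exact mul_inv_cancel_right₀ hft _
  set E : ℂ := ∑ s : ZMod m, p s • f s with hE
  have hnormsq : Complex.normSq E = ∑ s : ZMod m, ∑ t : ZMod m, p s * p t * (f (s - t)).re := by
    have hc : (E * (starRingEnd ℂ) E) = ∑ s : ZMod m, ∑ t : ZMod m, ((p s * p t : ℝ) : ℂ) * f (s - t) := by
      rw [hE, map_sum, Finset.sum_mul_sum]
      apply Finset.sum_congr rfl; intro s _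
      apply Finset.sum_congr rfl; intro t _
      rw [Complex.real_smul, Complex.real_smul, map_mul, Complex.conj_ofReal]
      rw [← hfmul s t]
      push_cast
      ring
    have h2 := congrArg Complex.re hc
    rw [Complex.mul_conj] at h2
    rw [Complex.ofReal_re] at h2
    rw [h2, Complex.re_sum]
    apply Finset.sum_congr rfl; intro s _
    rw [Complex.re_sum]
    apply Finset.sum_congr rfl; intro t _
    rw [Complex.re_ofReal_mul]
  set c : ℝ := 2 / (m : ℝ) ^ 2 with hcc
  have hc0 : 0 < c := by positivity
  have hre : ∀ k : ZMod m, (f k).re ≤ (1 - c) + c * (if k = 0 then 1 else 0) := by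
    intro k
    by_cases hk : k = 0
    · simp only [hk, if_true, mul_one]
      have : f (0 : ZMod m) = 1 := by
        show ζ ^ (0 : ZMod m).val = 1
        rw [ZMod.val_zero, pow_zero]
      rw [this]
      simp
    · simp only [hk, if_false, mul_zero, add_zero]
      have hkv0 : 0 < k.val := by
        rcases Nat.eq_zero_or_pos k.val with h | h
        · exact absurd ((ZMod.val_eq_zero k).mp h) hk
        · exact h
      have hne1 : f k ≠ 1 := hζ.pow_ne_one_of_pos_of_lt hkv0.ne' (ZMod.val_lt k)
      exact aux_re m hm (f k) (hfm k) hne1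
  have hsumsq : ∑ s : ZMod m, p s ^ 2 ≤ 1 - ε := by
    calc ∑ s : ZMod m, p s ^ 2 ≤ ∑ s : ZMod m, p s * (1 - ε) :=
          Finset.sum_le_sum fun s _ => by nlinarith [hp0 s, hy s]
      _ = 1 - ε := by rw [← Finset.sum_mul, hpsum, one_mul]
  have key : Complex.normSq E ≤ 1 - c * ε := by
    rw [hnormsq]
    have step1 : ∑ s : ZMod m, ∑ t : ZMod m, p s * p t * (f (s - t)).re
        ≤ ∑ s : ZMod m, ∑ t : ZMod m, ((1 - c) * (p s * p t) + c * (if t = s then p s * p t else 0)) := by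
      apply Finset.sum_le_sum; intro s _
      apply Finset.sum_le_sum; intro t _
      have hpst : 0 ≤ p s * p t := mul_nonneg (hp0 s) (hp0 t)
      have := hre (s - t)
      by_cases ht : t = s
      · simp only [ht, sub_self, if_true] at *
        nlinarith [this]
      · have hst : ¬(s - t = 0) := fun h => ht (sub_eq_zero.mp h).symm
        simp only [ht, if_false, hst, mul_zero, add_zero] at *
        nlinarith [this]
    have step2 : ∑ s : ZMod m, ∑ t : ZMod m, ((1 - c) * (p s * p t) + c * (if t = s then p s * p t else 0))
        = (1 - c) + c * ∑ s : ZMod m, p s ^ 2 := by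
      rw [Finset.sum_congr rfl (fun s _ => Finset.sum_add_distrib)]
      rw [Finset.sum_add_distrib]
      congr 1
      · have : ∀ s : ZMod m, ∑ t : ZMod m, (1 - c) * (p s * p t) = (1 - c) * p s := by
          intro s
          rw [← Finset.mul_sum, ← Finset.mul_sum, hpsum, mul_one]
        rw [Finset.sum_congr rfl (fun s _ => this s), ← Finset.mul_sum, hpsum, mul_one]
      · have : ∀ s : ZMod m, ∑ t : ZMod m, c * (if t = s then p s * p t else 0) = c * p s ^ 2 := by
          intro s
          rw [← Finset.mul_sum, Finset.sum_ite_eq' Finset.univ s (fun t => p s * p t)]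
          simp [sq]
        rw [Finset.sum_congr rfl (fun s _ => this s), ← Finset.mul_sum]
    calc ∑ s : ZMod m, ∑ t : ZMod m, p s * p t * (f (s - t)).re
        ≤ (1 - c) + c * ∑ s : ZMod m, p s ^ 2 := by rw [← step2]; exact step1
      _ ≤ (1 - c) + c * (1 - ε) := by nlinarith [hsumsq, hc0]
      _ = 1 - c * ε := by ring
  have habsE : ‖E‖ = Real.sqrt (Complex.normSq E) := Complex.norm_def E
  show ‖E‖ ≤ Real.exp (-ε / (m : ℝ) ^ 2)
  rw [habsE]
  have h1 : Complex.normSq E ≤ Real.exp (-(c * ε)) := by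
    have := Real.add_one_le_exp (-(c * ε))
    linarith [key]
  calc Real.sqrt (Complex.normSq E) ≤ Real.sqrt (Real.exp (-(c * ε))) := Real.sqrt_le_sqrt h1
    _ = Real.exp (-ε / (m : ℝ) ^ 2) := by
        rw [show -(c * ε) = (-ε / (m:ℝ)^2) + (-ε / (m:ℝ)^2) by rw [hcc]; field_simp; ring]
        rw [Real.exp_add, Real.sqrt_mul_self (Real.exp_pos _).le]
end

section
/- Let R be a finite commutative ring, N a finite R-module, V = Rⁿ, F ∈ Hom_R(V, N), and C : N → ℤ/mℤ a nonzero additive homomorphism, where m = |R|. Suppose F is a code of distance δn. Then there are at least δn indices j ∈ [n] such that the additive homomorphism R → ℤ/mℤ given by x ↦ C(F(v_j) x) is nonzero, where v_j is the j-th standard basis vector. -/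
/-- `V_σ`: the submodule of `Rⁿ` generated by the standard basis vectors `v_i`
with `i ∉ σ`. -/
def distSubmodule (R : Type*) [CommRing R] (n : ℕ) (σ : Finset (Fin n)) :
    Submodule R (Fin n → R) :=
  Submodule.span R {v | ∃ i ∉ σ, v = Pi.single i 1}

/-- `F` is a code of distance `w` if `F(V_σ) = N` for all `σ` with `|σ| < w`. -/
def IsCode {R : Type*} [CommRing R] {n : ℕ} {N : Type*} [AddCommGroup N]
    [Module R N] (F : (Fin n → R) →ₗ[R] N) (w : ℝ) : Prop :=
  ∀ σ : Finset (Fin n), (σ.card : ℝ) < w →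
    Submodule.map F (distSubmodule R n σ) = ⊤

/-- If `R` is a finite commutative ring, `N` a finite `R`-module,
`F ∈ Hom_R(Rⁿ, N)` a code of distance `δn`, and `C : N → ℤ/mℤ` (with `m = |R|`)
a nonzero additive homomorphism, then there are at least `δn` indices `j` such
that the additive map `x ↦ C(F(v_j)·x)` (i.e. `x ↦ C(F(Pi.single j x))`) is
nonzero. -/
theorem stmt_5 (R : Type*) [CommRing R] [Finite R]
    {N : Type*} [AddCommGroup N] [Module R N] [Finite N]
    (n : ℕ) (δ : ℝ) (hδ : 0 < δ)
    (F : (Fin n → R) →ₗ[R] N) (hcode : IsCode F (δ * n))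
    (C : N →+ ZMod (Nat.card R)) (hC : C ≠ 0) :
    δ * n ≤ ({j : Fin n | ∃ x : R, C (F (Pi.single j x)) ≠ 0}.ncard : ℝ) := by
  by_contra h
  push_neg at h
  set S := {j : Fin n | ∃ x : R, C (F (Pi.single j x)) ≠ 0} with hS
  have hfin : S.Finite := Set.toFinite _
  have hlt : (hfin.toFinset.card : ℝ) < δ * n := by
    rwa [Set.ncard_eq_toFinset_card S hfin] at h
  have htop := hcode hfin.toFinset hlt
  have hker : ∀ v ∈ distSubmodule R n hfin.toFinset, ∀ r : R, C (F (r • v)) = 0 := by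
    intro v hv
    induction hv using Submodule.span_induction with
    | mem x hx =>
      obtain ⟨i, hi, rfl⟩ := hx
      intro r
      have hib : i ∉ S := by simpa using hi
      have : ∀ x : R, C (F (Pi.single i x)) = 0 := by
        simpa [hS] using hib
      have hr : r • (Pi.single i (1 : R) : Fin n → R) = Pi.single i r := by
        ext j
        by_cases hji : j = i <;> simp [hji, Pi.single_apply]
      rw [hr]
      exact this r
    | zero => intro r; simp
    | add x y hx hy ihx ihy =>
      intro r
      rw [smul_add, map_add, map_add, ihx r, ihy r, add_zero]
    | smul s x hx ihx =>
      intro r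
      rw [smul_smul]
      exact ihx (r * s)
  have : C = 0 := by
    ext y
    have : y ∈ Submodule.map F (distSubmodule R n hfin.toFinset) := htop ▸ Submodule.mem_top
    obtain ⟨v, hv, rfl⟩ := this
    have := hker v hv 1
    simpa using this
  exact hC this
end
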